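/- If x₁ ~ N(μ₁, σ₁²) and x₂ ~ N(μ₂, σ₂²) are independent, then for any δ > 0, E[exp(−(x₁−x₂)²/δ²)] = δ · exp(−(μ₁−μ₂)²/(δ² + 2σ₁² + 2σ₂²)) / √(δ² + 2σ₁² + 2σ₂²). -/

import Mathlib

open MeasureTheory ProbabilityTheory Real

lemma integral_exp_gaussianReal (m c s : ℝ) (hs : 0 < s) (v : NNReal) (hv : 0 < (v : ℝ)) :
    ∫ x, Real.exp (-(x - c) ^ 2 / s) ∂(gaussianReal m v) =
      Real.sqrt (s / (s + 2 * v)) * Real.exp (-(c - m) ^ 2 / (s + 2 * v)) := by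
  have hv0 : v ≠ 0 := by
    simpa [← NNReal.coe_pos] using hv.ne'
  have hsv : (0:ℝ) < s + 2 * v := by positivity
  set A : ℝ := (s + 2 * v) / (2 * v * s) with hA
  have hApos : 0 < A := by positivity
  set t : ℝ := (m / (2 * v) + c / s) / A with ht
  rw [gaussianReal_of_var_ne_zero m hv0, gaussianPDF_def]
  have hmeas : Measurable fun x => (gaussianPDFReal m v x).toNNReal :=
    (measurable_gaussianPDFReal m v).real_toNNReal
  rw [show (fun x => ENNReal.ofReal (gaussianPDFReal m v x))
      = (fun x => ((gaussianPDFReal m v x).toNNReal : ENNReal)) from rfl,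
    integral_withDensity_eq_integral_smul hmeas]
  simp_rw [NNReal.smul_def, Real.coe_toNNReal _ (gaussianPDFReal_nonneg m v _), smul_eq_mul,
    gaussianPDFReal]
  have key : ∀ x : ℝ, Real.exp (-(x - m) ^ 2 / (2 * v)) * Real.exp (-(x - c) ^ 2 / s)
      = Real.exp (-(c - m) ^ 2 / (s + 2 * v)) * Real.exp (-A * (x - t) ^ 2) := by
    intro x
    rw [← Real.exp_add, ← Real.exp_add]
    congr 1
    rw [ht, hA]
    field_simp
    ring
  simp_rw [mul_assoc, key, ← mul_assoc]
  rw [integral_const_mul,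
    integral_sub_right_eq_self (fun y => Real.exp (-A * y ^ 2)) t, integral_gaussian]
  have hconst : (Real.sqrt (2 * π * v))⁻¹ * Real.sqrt (π / A) = Real.sqrt (s / (s + 2 * v)) := by
    rw [← Real.sqrt_inv, ← Real.sqrt_mul (by positivity)]
    congr 1
    rw [hA]
    field_simp
  rw [← hconst]
  ring

/-- For independent x₁ ~ N(μ₁, σ₁²), x₂ ~ N(μ₂, σ₂²) and any δ > 0,
E[exp(−(x₁−x₂)²/δ²)] = δ·exp(−(μ₁−μ₂)²/(δ²+2σ₁²+2σ₂²))/√(δ²+2σ₁²+2σ₂²). -/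
theorem gaussian_expectation_rbf (μ₁ μ₂ σ₁ σ₂ δ : ℝ)
    (hσ₁ : 0 < σ₁) (hσ₂ : 0 < σ₂) (hδ : 0 < δ) :
    ∫ p : ℝ × ℝ, Real.exp (-(p.1 - p.2) ^ 2 / δ ^ 2)
        ∂((gaussianReal μ₁ ⟨σ₁ ^ 2, sq_nonneg σ₁⟩).prod
          (gaussianReal μ₂ ⟨σ₂ ^ 2, sq_nonneg σ₂⟩)) =
      δ * Real.exp (-(μ₁ - μ₂) ^ 2 / (δ ^ 2 + 2 * σ₁ ^ 2 + 2 * σ₂ ^ 2)) /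
        Real.sqrt (δ ^ 2 + 2 * σ₁ ^ 2 + 2 * σ₂ ^ 2) := by
  have hδ2 : (0:ℝ) < δ ^ 2 := pow_pos hδ 2
  haveI := instIsProbabilityMeasureGaussianReal μ₁ ⟨σ₁ ^ 2, sq_nonneg σ₁⟩
  haveI := instIsProbabilityMeasureGaussianReal μ₂ ⟨σ₂ ^ 2, sq_nonneg σ₂⟩
  have hv₁ : (0:ℝ) < ((⟨σ₁ ^ 2, sq_nonneg σ₁⟩ : NNReal) : ℝ) := pow_pos hσ₁ 2
  have hv₂ : (0:ℝ) < ((⟨σ₂ ^ 2, sq_nonneg σ₂⟩ : NNReal) : ℝ) := pow_pos hσ₂ 2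
  have hint : Integrable (fun p : ℝ × ℝ => Real.exp (-(p.1 - p.2) ^ 2 / δ ^ 2))
      ((gaussianReal μ₁ ⟨σ₁ ^ 2, sq_nonneg σ₁⟩).prod (gaussianReal μ₂ ⟨σ₂ ^ 2, sq_nonneg σ₂⟩)) := by
    refine (integrable_const (1:ℝ)).mono' (Continuous.aestronglyMeasurable (by continuity)) ?_
    filter_upwards with p
    rw [Real.norm_eq_abs, abs_of_pos (Real.exp_pos _)]
    exact Real.exp_le_one_iff.mpr (div_nonpos_of_nonpos_of_nonneg
      (neg_nonpos_of_nonneg (sq_nonneg _)) hδ2.le)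
  rw [MeasureTheory.integral_prod _ hint]
  have inner : ∀ x₁ : ℝ, ∫ x₂, Real.exp (-(x₁ - x₂) ^ 2 / δ ^ 2)
        ∂(gaussianReal μ₂ ⟨σ₂ ^ 2, sq_nonneg σ₂⟩)
      = Real.sqrt (δ ^ 2 / (δ ^ 2 + 2 * σ₂ ^ 2))
        * Real.exp (-(x₁ - μ₂) ^ 2 / (δ ^ 2 + 2 * σ₂ ^ 2)) := by
    intro x₁
    have h := integral_exp_gaussianReal μ₂ x₁ (δ ^ 2) hδ2 ⟨σ₂ ^ 2, sq_nonneg σ₂⟩ hv₂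
    simp_rw [show ∀ x₂ : ℝ, (x₁ - x₂) ^ 2 = (x₂ - x₁) ^ 2 from fun x₂ => by ring]
    rw [show (μ₂ - x₁) ^ 2 = (x₁ - μ₂) ^ 2 by ring]
    exact h
  simp_rw [inner]
  rw [integral_const_mul,
    integral_exp_gaussianReal μ₁ μ₂ (δ ^ 2 + 2 * σ₂ ^ 2) (by positivity) _ hv₁]
  show Real.sqrt (δ ^ 2 / (δ ^ 2 + 2 * σ₂ ^ 2)) *
      (Real.sqrt ((δ ^ 2 + 2 * σ₂ ^ 2) / (δ ^ 2 + 2 * σ₂ ^ 2 + 2 * σ₁ ^ 2)) *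
        Real.exp (-(μ₂ - μ₁) ^ 2 / (δ ^ 2 + 2 * σ₂ ^ 2 + 2 * σ₁ ^ 2))) = _
  rw [← mul_assoc, ← Real.sqrt_mul (by positivity),
    show δ ^ 2 / (δ ^ 2 + 2 * σ₂ ^ 2) * ((δ ^ 2 + 2 * σ₂ ^ 2) / (δ ^ 2 + 2 * σ₂ ^ 2 + 2 * σ₁ ^ 2))
      = δ ^ 2 / (δ ^ 2 + 2 * σ₁ ^ 2 + 2 * σ₂ ^ 2) by
        rw [div_mul_div_comm]; rw [mul_comm (δ ^ 2 + 2 * σ₂ ^ 2)]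
        rw [mul_div_mul_right _ _ (by positivity : (δ ^ 2 + 2 * σ₂ ^ 2) ≠ 0)]; ring_nf,
    Real.sqrt_div (sq_nonneg δ), Real.sqrt_sq hδ.le,
    show -(μ₂ - μ₁) ^ 2 / (δ ^ 2 + 2 * σ₂ ^ 2 + 2 * σ₁ ^ 2)
      = -(μ₁ - μ₂) ^ 2 / (δ ^ 2 + 2 * σ₁ ^ 2 + 2 * σ₂ ^ 2) by ring_nf]
  ring
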